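/- Let n ≥ 3 and λ > 0. For all y, η ∈ ℝⁿ with |y| ≥ λ, |η| ≥ λ and y ≠ η, the Green's function G_λ satisfies the two-sided bound: (1/(2λ²))·(|y|²−λ²)·(|η|²−λ²)·(λ/|y|)ⁿ·|y^λ−η|^{−n} ≤ σₙ·G_λ(y,η) ≤ (1/(2λ²))·(|y|²−λ²)·(|η|²−λ²)·|y−η|^{−n}. In particular G_λ(y,η) ≥ 0. -/

import Mathlib

set_option maxHeartbeats 1000000


open Metric Set MeasureTheory

noncomputable section

abbrev Euc (n : ℕ) := EuclideanSpace ℝ (Fin n)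

/-- The inverted point `y^λ = λ²y/|y|²`. -/
def invPt {n : ℕ} (lam : ℝ) (y : Euc n) : Euc n := (lam ^ 2 / ‖y‖ ^ 2) • y

/-- Surface measure `σₙ` of the unit sphere in `ℝⁿ` (equal to `n·vol(Bⁿ)`). -/
def sphereArea (n : ℕ) : ℝ :=
  (n : ℝ) * (volume (Metric.ball (0 : Euc n) 1)).toReal

/-- The Dirichlet Green's function of `-Δ` on `ℝⁿ ∖ cl(B(0,λ))`. -/
def greenG (n : ℕ) (lam : ℝ) (y η : Euc n) : ℝ :=
  (1 / (((n : ℝ) - 2) * sphereArea n)) *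
    (‖y - η‖ ^ ((2 : ℝ) - (n : ℝ))
      - (‖y‖ / lam) ^ ((2 : ℝ) - (n : ℝ)) * ‖invPt lam y - η‖ ^ ((2 : ℝ) - (n : ℝ)))

/-- `b^{k+1} - a^{k+1} ≤ (k+1)(b-a)b^k` for `0 ≤ a ≤ b`. -/
lemma green_lemA (k : ℕ) {a b : ℝ} (ha : 0 ≤ a) (hab : a ≤ b) :
    b ^ (k+1) - a ^ (k+1) ≤ ((k:ℝ)+1) * (b - a) * b ^ k := by
  induction k with
  | zero => simp
  | succ k ih =>
    have hb : 0 ≤ b := ha.trans hab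
    have hp : a ^ (k+1) ≤ b ^ (k+1) := pow_le_pow_left₀ ha hab _
    have h2 := mul_le_mul_of_nonneg_left ih hb
    have e1 : b ^ (k+2) - a ^ (k+2) = b * (b ^ (k+1) - a ^ (k+1)) + (b - a) * a ^ (k+1) := by ring
    have e2 : b * (((k:ℝ)+1) * (b - a) * b ^ k) = ((k:ℝ)+1) * (b - a) * b ^ (k+1) := by ring
    have h3 : (b - a) * a ^ (k+1) ≤ (b - a) * b ^ (k+1) :=
      mul_le_mul_of_nonneg_left hp (sub_nonneg.2 hab)
    have : ((k:ℝ)+1+1) * (b - a) * b ^ (k+1)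
        = ((k:ℝ)+1) * (b - a) * b ^ (k+1) + (b - a) * b ^ (k+1) := by ring
    push_cast
    linarith [h2, h3]

/-- `(k+1)(b-a)a^k ≤ b^{k+1} - a^{k+1}` for `0 ≤ a ≤ b`. -/
lemma green_lemB (k : ℕ) {a b : ℝ} (ha : 0 ≤ a) (hab : a ≤ b) :
    ((k:ℝ)+1) * (b - a) * a ^ k ≤ b ^ (k+1) - a ^ (k+1) := by
  induction k with
  | zero => simp
  | succ k ih =>
    have hb : 0 ≤ b := ha.trans hab
    have hp : a ^ (k+1) ≤ b ^ (k+1) := pow_le_pow_left₀ ha hab _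
    have h2 := mul_le_mul_of_nonneg_left ih ha
    have e1 : b ^ (k+2) - a ^ (k+2) = a * (b ^ (k+1) - a ^ (k+1)) + (b - a) * b ^ (k+1) := by ring
    have e2 : a * (((k:ℝ)+1) * (b - a) * a ^ k) = ((k:ℝ)+1) * (b - a) * a ^ (k+1) := by ring
    have h3 : (b - a) * a ^ (k+1) ≤ (b - a) * b ^ (k+1) :=
      mul_le_mul_of_nonneg_left hp (sub_nonneg.2 hab)
    have : ((k:ℝ)+1+1) * (b - a) * a ^ (k+1)
        = ((k:ℝ)+1) * (b - a) * a ^ (k+1) + (b - a) * a ^ (k+1) := by ring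
    push_cast
    linarith [h2, h3]

/-- The core scalar two-sided bound. -/
lemma green_core (k : ℕ) {a b : ℝ} (ha : 0 < a) (hab : a ≤ b) :
    (b^2 - a^2)/2 * (b^(k+3))⁻¹ ≤ (1/((k:ℝ)+1)) * ((a^(k+1))⁻¹ - (b^(k+1))⁻¹) ∧
    (1/((k:ℝ)+1)) * ((a^(k+1))⁻¹ - (b^(k+1))⁻¹) ≤ (b^2 - a^2)/2 * (a^(k+3))⁻¹ := by
  have hb : 0 < b := ha.trans_le hab
  have hk1 : (0:ℝ) < (k:ℝ)+1 := by positivity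
  have emid : (1/((k:ℝ)+1)) * ((a^(k+1))⁻¹ - (b^(k+1))⁻¹)
      = (b^(k+1) - a^(k+1)) / (((k:ℝ)+1) * a^(k+1) * b^(k+1)) := by
    have hP : (a:ℝ)^(k+1) ≠ 0 := by positivity
    have hQ : (b:ℝ)^(k+1) ≠ 0 := by positivity
    rw [inv_sub_inv hP hQ]
    field_simp
  have hA := green_lemA k ha.le hab
  have hB := green_lemB k ha.le hab
  have hPk : (0:ℝ) < a ^ k := pow_pos ha k
  have hQk : (0:ℝ) < b ^ k := pow_pos hb k
  constructor
  · rw [emid, show (b^2 - a^2)/2 * (b^(k+3))⁻¹ = (b^2-a^2) / (2 * b^(k+3)) by ring,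
      div_le_div_iff₀ (by positivity) (by positivity)]
    have h1 : (((k:ℝ)+1) * (b-a) * a^k) * (2 * b^(k+3)) ≤ (b^(k+1) - a^(k+1)) * (2 * b^(k+3)) :=
      mul_le_mul_of_nonneg_right hB (by positivity)
    have h2 : (b^2-a^2) * (((k:ℝ)+1) * a^(k+1) * b^(k+1))
        ≤ (((k:ℝ)+1) * (b-a) * a^k) * (2 * b^(k+3)) := by
      have expand : (((k:ℝ)+1) * (b-a) * a^k) * (2 * b^(k+3))
          - (b^2-a^2) * (((k:ℝ)+1) * a^(k+1) * b^(k+1))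
          = ((k:ℝ)+1) * (b-a) * a^k * b^(k+1) * (2*b^2 - (b+a)*a) := by ring
      nlinarith [mul_nonneg (mul_nonneg (mul_nonneg (mul_nonneg hk1.le (sub_nonneg.2 hab))
        hPk.le) (pow_pos hb (k+1)).le) (show (0:ℝ) ≤ 2*b^2 - (b+a)*a by nlinarith)]
    linarith
  · rw [emid, show (b^2 - a^2)/2 * (a^(k+3))⁻¹ = (b^2-a^2) / (2 * a^(k+3)) by ring,
      div_le_div_iff₀ (by positivity) (by positivity)]
    have h1 : (b^(k+1) - a^(k+1)) * (2 * a^(k+3)) ≤ (((k:ℝ)+1) * (b-a) * b^k) * (2 * a^(k+3)) :=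
      mul_le_mul_of_nonneg_right hA (by positivity)
    have h2 : (((k:ℝ)+1) * (b-a) * b^k) * (2 * a^(k+3))
        ≤ (b^2-a^2) * (((k:ℝ)+1) * a^(k+1) * b^(k+1)) := by
      have expand : (b^2-a^2) * (((k:ℝ)+1) * a^(k+1) * b^(k+1))
          - (((k:ℝ)+1) * (b-a) * b^k) * (2 * a^(k+3))
          = ((k:ℝ)+1) * (b-a) * b^k * a^(k+1) * ((b+a)*b - 2*a^2) := by ring
      nlinarith [mul_nonneg (mul_nonneg (mul_nonneg (mul_nonneg hk1.le (sub_nonneg.2 hab))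
        hQk.le) (pow_pos ha (k+1)).le) (show (0:ℝ) ≤ (b+a)*b - 2*a^2 by nlinarith)]
    linarith

/-- The key norm identity for the inverted point. -/
lemma invPt_norm_identity {n : ℕ} (lam : ℝ) (hlam : 0 < lam) (y η : Euc n)
    (hy : 0 < ‖y‖) :
    (‖y‖ / lam) ^ 2 * ‖invPt lam y - η‖ ^ 2
      = ‖y - η‖ ^ 2 + (‖y‖ ^ 2 - lam ^ 2) * (‖η‖ ^ 2 - lam ^ 2) / lam ^ 2 := by
  have h1 : ‖invPt lam y - η‖ ^ 2
      = ‖invPt lam y‖ ^ 2 - 2 * inner ℝ (invPt lam y) η + ‖η‖ ^ 2 :=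
    norm_sub_sq_real _ _
  have h2 : ‖y - η‖ ^ 2 = ‖y‖ ^ 2 - 2 * inner ℝ y η + ‖η‖ ^ 2 := norm_sub_sq_real _ _
  have h3 : (inner ℝ (invPt lam y) η : ℝ) = (lam ^ 2 / ‖y‖ ^ 2) * inner ℝ y η := by
    rw [invPt]; exact real_inner_smul_left y η _
  have h4 : ‖invPt lam y‖ ^ 2 = (lam ^ 2 / ‖y‖ ^ 2) ^ 2 * ‖y‖ ^ 2 := by
    rw [invPt, norm_smul, Real.norm_eq_abs, mul_pow, sq_abs]
  rw [h1, h2, h3, h4]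
  have hy0 : ‖y‖ ≠ 0 := hy.ne'
  have hl0 : lam ≠ 0 := hlam.ne'
  field_simp
  ring

/-- two-sided bound for the Green's function `G_λ`. -/
theorem green_two_sided_bound (n : ℕ) (hn : 3 ≤ n) (lam : ℝ) (hlam : 0 < lam)
    (y η : Euc n) (hy : lam ≤ ‖y‖) (hη : lam ≤ ‖η‖) (hne : y ≠ η) :
    (1 / (2 * lam ^ 2)) * (‖y‖ ^ 2 - lam ^ 2) * (‖η‖ ^ 2 - lam ^ 2)
        * (lam / ‖y‖) ^ (n : ℝ) * ‖invPt lam y - η‖ ^ (-(n : ℝ))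
      ≤ sphereArea n * greenG n lam y η ∧
    sphereArea n * greenG n lam y η
      ≤ (1 / (2 * lam ^ 2)) * (‖y‖ ^ 2 - lam ^ 2) * (‖η‖ ^ 2 - lam ^ 2)
          * ‖y - η‖ ^ (-(n : ℝ)) ∧
    0 ≤ greenG n lam y η := by
  obtain ⟨k, rfl⟩ : ∃ k, n = k + 3 := ⟨n - 3, by omega⟩
  have hy0 : (0:ℝ) < ‖y‖ := hlam.trans_le hy
  have ha : (0:ℝ) < ‖y - η‖ := by rw [norm_pos_iff]; exact sub_ne_zero.2 hne
  set a := ‖y - η‖ with ha'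
  set c := ‖invPt lam y - η‖ with hc'
  have hid := invPt_norm_identity lam hlam y η hy0
  set b := (‖y‖ / lam) * c with hb'
  have hb2 : b ^ 2 = a ^ 2 + (‖y‖^2 - lam^2) * (‖η‖^2 - lam^2) / lam^2 := by
    rw [hb', mul_pow]; exact hid
  have hDy : 0 ≤ ‖y‖^2 - lam^2 := by nlinarith
  have hDη : 0 ≤ ‖η‖^2 - lam^2 := by nlinarith
  have hD : 0 ≤ (‖y‖^2 - lam^2) * (‖η‖^2 - lam^2) / lam^2 := by positivity
  have hcnn : 0 ≤ c := norm_nonneg _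
  have hbnn : 0 ≤ b := mul_nonneg (by positivity) hcnn
  have hab : a ≤ b := by nlinarith [hb2]
  have hbpos : (0:ℝ) < b := ha.trans_le hab
  have hcpos : (0:ℝ) < c := by
    rcases mul_pos_iff.mp hbpos with ⟨_, h⟩ | ⟨h, _⟩
    · exact h
    · exact absurd (div_pos hy0 hlam) (not_lt.2 h.le)
  -- rpow conversions
  have hcast1 : ((2:ℝ) - ((k+3:ℕ):ℝ)) = -(((k+1:ℕ)):ℝ) := by push_cast; ring
  have hrp : ∀ x : ℝ, 0 < x → x ^ ((2:ℝ) - ((k+3:ℕ):ℝ)) = (x ^ (k+1))⁻¹ := by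
    intro x hx
    rw [hcast1, Real.rpow_neg hx.le, Real.rpow_natCast]
  have hrn : ∀ x : ℝ, 0 < x → x ^ (-(((k+3:ℕ)):ℝ)) = (x ^ (k+3))⁻¹ := by
    intro x hx
    rw [Real.rpow_neg hx.le, Real.rpow_natCast]
  have E1 : a ^ ((2:ℝ) - ((k+3:ℕ):ℝ)) = (a ^ (k+1))⁻¹ := hrp a ha
  have E2 : (‖y‖/lam) ^ ((2:ℝ) - ((k+3:ℕ):ℝ)) * c ^ ((2:ℝ) - ((k+3:ℕ):ℝ)) = (b ^ (k+1))⁻¹ := by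
    rw [← Real.mul_rpow (by positivity) hcnn, ← hb', hrp b hbpos]
  have E3 : (lam/‖y‖) ^ (((k+3:ℕ)):ℝ) * c ^ (-(((k+3:ℕ)):ℝ)) = (b ^ (k+3))⁻¹ := by
    rw [show lam/‖y‖ = (‖y‖/lam)⁻¹ from (inv_div _ _).symm,
      Real.inv_rpow (by positivity), ← Real.rpow_neg (by positivity),
      ← Real.mul_rpow (by positivity) hcnn, ← hb', hrn b hbpos]
  have E4 : a ^ (-(((k+3:ℕ)):ℝ)) = (a ^ (k+3))⁻¹ := hrn a ha
  -- sphere area is positive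
  have hσ : 0 < sphereArea (k+3) := by
    unfold sphereArea
    have h1 : (0:ℝ) < (volume (ball (0 : Euc (k+3)) 1)).toReal :=
      ENNReal.toReal_pos (measure_ball_pos volume 0 one_pos).ne' measure_ball_lt_top.ne
    positivity
  have hn2 : ((k+3:ℕ):ℝ) - 2 = (k:ℝ)+1 := by push_cast; ring
  have hk1 : ((k:ℝ)+1) ≠ 0 := by positivity
  have hσG : sphereArea (k+3) * greenG (k+3) lam y η
      = (1/((k:ℝ)+1)) * ((a^(k+1))⁻¹ - (b^(k+1))⁻¹) := by
    unfold greenG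
    rw [← ha', ← hc', E1, E2, hn2]
    field_simp
  have hba : b^2 - a^2 = (‖y‖^2 - lam^2) * (‖η‖^2 - lam^2) / lam^2 := by rw [hb2]; ring
  have EL : 1 / (2 * lam ^ 2) * (‖y‖ ^ 2 - lam ^ 2) * (‖η‖ ^ 2 - lam ^ 2)
        * (lam / ‖y‖) ^ (((k+3:ℕ)):ℝ) * c ^ (-(((k+3:ℕ)):ℝ))
      = (b^2 - a^2)/2 * (b^(k+3))⁻¹ := by
    calc 1 / (2 * lam ^ 2) * (‖y‖ ^ 2 - lam ^ 2) * (‖η‖ ^ 2 - lam ^ 2)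
          * (lam / ‖y‖) ^ (((k+3:ℕ)):ℝ) * c ^ (-(((k+3:ℕ)):ℝ))
        = (1 / (2 * lam ^ 2) * (‖y‖ ^ 2 - lam ^ 2) * (‖η‖ ^ 2 - lam ^ 2))
          * ((lam / ‖y‖) ^ (((k+3:ℕ)):ℝ) * c ^ (-(((k+3:ℕ)):ℝ))) := by ring
      _ = (1 / (2 * lam ^ 2) * (‖y‖ ^ 2 - lam ^ 2) * (‖η‖ ^ 2 - lam ^ 2)) * (b^(k+3))⁻¹ := by
          rw [E3]
      _ = (b^2 - a^2)/2 * (b^(k+3))⁻¹ := by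
          rw [hba]
          have : lam ≠ 0 := hlam.ne'
          field_simp
  have ER : 1 / (2 * lam ^ 2) * (‖y‖ ^ 2 - lam ^ 2) * (‖η‖ ^ 2 - lam ^ 2)
        * a ^ (-(((k+3:ℕ)):ℝ))
      = (b^2 - a^2)/2 * (a^(k+3))⁻¹ := by
    rw [E4, hba]
    have : lam ≠ 0 := hlam.ne'
    field_simp
  have hcore := green_core k ha hab
  refine ⟨?_, ?_, ?_⟩
  · rw [EL, hσG]; exact hcore.1
  · rw [ER, hσG]; exact hcore.2
  · have h0 : 0 ≤ sphereArea (k+3) * greenG (k+3) lam y η := by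
      rw [hσG]
      refine le_trans ?_ hcore.1
      have : 0 ≤ b^2 - a^2 := by nlinarith
      positivity
    by_contra h
    push_neg at h
    nlinarith [mul_pos hσ (neg_pos.2 h)]
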